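/- arXiv:1608.04091 — 16 statements merged into one kernel-verified Lean document; each statement's English description precedes it below -/
import Mathlib

section
/- The strict sublevel-set inclusion {y : φ_{A,k}(y) < t} ⊆ A + tk holds for all t ∈ ℝ if and only if k ∈ −0⁺A, where 0⁺A is the recession cone of A. -/
/-- `phi A k y = inf { t : ℝ | y ∈ A + t • k }`, valued in `EReal`
(`⊤` plays the role of the symbol `ν = inf ∅`, `⊥` is `-∞`). -/
noncomputable def phi {Y : Type*} [AddCommGroup Y] [Module ℝ Y]
    (A : Set Y) (k : Y) (y : Y) : EReal :=
  sInf ((fun t : ℝ => (t : EReal)) '' {t : ℝ | y - t • k ∈ A})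

/-- The algebraic interior (core) of a set. -/
def algCore {Y : Type*} [AddCommGroup Y] [Module ℝ Y] (A : Set Y) : Set Y :=
  {a | a ∈ A ∧ ∀ y : Y, ∃ t : ℝ, 0 < t ∧ ∀ s : ℝ, 0 ≤ s → s ≤ t → a + s • y ∈ A}

/-- The recession cone `0⁺A`. -/
def recCone {Y : Type*} [AddCommGroup Y] [Module ℝ Y] (A : Set Y) : Set Y :=
  {u | ∀ a ∈ A, ∀ t : ℝ, 0 ≤ t → a + t • u ∈ A}

/-- `A` is `k`-directionally closed. -/
def DirClosed {Y : Type*} [AddCommGroup Y] [Module ℝ Y] (A : Set Y) (k : Y) : Prop :=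
  ∀ y : Y, (∃ t : ℕ → ℝ, (∀ n, 0 < t n) ∧ Antitone t ∧
    Filter.Tendsto t Filter.atTop (nhds 0) ∧ ∀ n, y - t n • k ∈ A) → y ∈ A

/-- `A` is algebraically closed. -/
def AlgClosed {Y : Type*} [AddCommGroup Y] [Module ℝ Y] (A : Set Y) : Prop :=
  ∀ a ∈ A, ∀ y : Y, (∀ l : ℝ, 0 < l → l < 1 → a + l • (y - a) ∈ A) → y ∈ A

/-- `C` is a cone: closed under nonnegative scalar multiplication. -/
def IsCone {Y : Type*} [AddCommGroup Y] [Module ℝ Y] (C : Set Y) : Prop :=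
  ∀ l : ℝ, 0 ≤ l → ∀ c ∈ C, l • c ∈ C

theorem strict_sublevel_subset_iff {Y : Type*} [AddCommGroup Y] [Module ℝ Y]
    (A : Set Y) (hA : A.Nonempty) (k : Y) (hk : k ≠ 0) :
    (∀ t : ℝ, {y : Y | phi A k y < (t : EReal)} ⊆ {y : Y | y - t • k ∈ A}) ↔
      -k ∈ recCone A := by
  constructor
  · intro h u ha t ht
    rcases eq_or_lt_of_le ht with rfl | ht
    · simpa using ha
    · have h0 : phi A k u ≤ ((0 : ℝ) : EReal) := by
        apply sInf_le
        exact ⟨0, by simpa using ha, rfl⟩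
      have hlt : phi A k u < (t : EReal) :=
        lt_of_le_of_lt h0 (by exact_mod_cast ht)
      have := h t hlt
      simpa [smul_neg, sub_eq_add_neg] using this
  · intro h t y hy
    simp only [Set.mem_setOf_eq, phi] at hy
    obtain ⟨b, hb, hbt⟩ := sInf_lt_iff.mp hy
    obtain ⟨r, hr, rfl⟩ := hb
    have hrt : r < t := by simpa using (EReal.coe_lt_coe_iff.mp hbt)
    have := h (y - r • k) hr (t - r) (by linarith)
    have e : y - r • k + (t - r) • (-k) = y - t • k := by
      rw [smul_neg, sub_smul]; abel
    rwa [e] at this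
end

section
/- If A is k-directionally closed, then the level set {y : φ_{A,k}(y) = t} is contained in A + tk for every t ∈ ℝ. -/
theorem level_set_subset_of_dirClosed {Y : Type*} [AddCommGroup Y] [Module ℝ Y]
    (A : Set Y) (hA : A.Nonempty) (k : Y) (hk : k ≠ 0)
    (hdc : DirClosed A k) :
    ∀ (t : ℝ) (y : Y), phi A k y = (t : EReal) → y - t • k ∈ A := by
  intro t y hphi
  set S : Set ℝ := {s : ℝ | y - s • k ∈ A} with hS
  have hlb : ∀ s ∈ S, t ≤ s := by
    intro s hs
    have h1 : (t : EReal) ≤ (s : EReal) := by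
      rw [← hphi]
      exact sInf_le ⟨s, hs, rfl⟩
    exact_mod_cast h1
  by_cases ht : t ∈ S
  · exact ht
  have hex : ∀ n : ℕ, ∃ u : ℝ, 0 < u ∧ u < 1 / (n + 1) ∧ (t + u) ∈ S := by
    intro n
    have hpos : (0 : ℝ) < 1 / (n + 1) := by positivity
    have hlt : phi A k y < ((t + 1 / (n + 1) : ℝ) : EReal) := by
      rw [hphi]
      exact_mod_cast lt_add_of_pos_right t hpos
    obtain ⟨e, he, hlt'⟩ := sInf_lt_iff.mp hlt
    obtain ⟨s, hs, rfl⟩ := he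
    have hlt2 : ((s : ℝ) : EReal) < ((t + 1 / (n + 1) : ℝ) : EReal) := hlt'
    have hs' : s < t + 1 / (n + 1) := EReal.coe_lt_coe_iff.mp hlt2
    have hst : t < s := lt_of_le_of_ne (hlb s hs) (fun h => ht (h ▸ hs))
    exact ⟨s - t, by linarith, by linarith, by simpa [hS] using hs⟩
  choose u hu0 hu1 huS using hex
  set v : ℕ → ℝ := fun n => (Finset.range (n + 1)).inf' (by simp) u with hv
  have hvmem : ∀ n, ∃ i, v n = u i := by
    intro n
    obtain ⟨i, _, hi⟩ := Finset.exists_mem_eq_inf' (s := Finset.range (n + 1)) (by simp) u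
    exact ⟨i, hi⟩
  have hvpos : ∀ n, 0 < v n := by
    intro n; obtain ⟨i, hi⟩ := hvmem n; rw [hi]; exact hu0 i
  have hvle : ∀ n, v n ≤ u n := fun n =>
    Finset.inf'_le _ (Finset.self_mem_range_succ n)
  have hvanti : Antitone v := by
    intro m n hmn
    exact Finset.le_inf' _ _ (fun i hi => Finset.inf'_le _
      (Finset.mem_range.mpr (lt_of_lt_of_le (Finset.mem_range.mp hi) (by omega))))
  have hvtend : Filter.Tendsto v Filter.atTop (nhds 0) := by
    apply squeeze_zero (fun n => (hvpos n).le) (fun n => (hvle n).trans (hu1 n).le)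
    exact tendsto_one_div_add_atTop_nhds_zero_nat
  apply hdc (y - t • k)
  refine ⟨v, hvpos, hvanti, hvtend, fun n => ?_⟩
  obtain ⟨i, hi⟩ := hvmem n
  have := huS i
  rw [hi]
  have : y - (t + u i) • k ∈ A := huS i
  rw [add_smul] at this
  simpa [sub_sub] using this
end

section
/- The equality {y : φ_{A,k}(y) ≤ t} = A + tk holds for all t ∈ ℝ if and only if k ∈ −0⁺A and A is k-directionally closed. -/
theorem sublevel_eq_iff {Y : Type*} [AddCommGroup Y] [Module ℝ Y]
    (A : Set Y) (hA : A.Nonempty) (k : Y) (hk : k ≠ 0) :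
    (∀ (t : ℝ) (y : Y), phi A k y ≤ (t : EReal) ↔ y - t • k ∈ A) ↔
      (-k ∈ recCone A ∧ DirClosed A k) := by
  constructor
  · intro h
    constructor
    · intro a ha s hs
      have h0 : phi A k a ≤ ((0 : ℝ) : EReal) := (h 0 a).2 (by simpa using ha)
      have hs' : phi A k a ≤ (s : EReal) := h0.trans (by exact_mod_cast hs)
      have hmem := (h s a).1 hs'
      simpa [smul_neg, sub_eq_add_neg] using hmem
    · rintro y ⟨t, htpos, _, hlim, hmem⟩
      have hle : ∀ n, phi A k y ≤ ((t n : ℝ) : EReal) := fun n => (h (t n) y).2 (hmem n)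
      have h0 : phi A k y ≤ ((0 : ℝ) : EReal) := by
        by_contra hc
        push_neg at hc
        obtain ⟨c, hc0, hcphi⟩ := (EReal.lt_iff_exists_real_btwn).1 hc
        have hc0' : (0 : ℝ) < c := by exact_mod_cast hc0
        obtain ⟨n, hn⟩ := (hlim.eventually_lt_const hc0').exists
        exact absurd ((hle n).trans_lt (by exact_mod_cast hn)) (not_lt.2 hcphi.le)
      simpa using (h 0 y).1 h0
  · rintro ⟨hrec, hdc⟩ t y
    have hup : ∀ s s' : ℝ, s ≤ s' → y - s • k ∈ A → y - s' • k ∈ A := by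
      intro s s' hss hm
      have h2 := hrec _ hm (s' - s) (by linarith)
      have heq : y - s • k + (s' - s) • (-k) = y - s' • k := by
        simp only [smul_neg, sub_smul]; abel
      rwa [heq] at h2
    constructor
    · intro hle
      have key : ∀ ε : ℝ, 0 < ε → y - (t + ε) • k ∈ A := by
        intro ε hε
        have hlt : phi A k y < ((t + ε : ℝ) : EReal) :=
          lt_of_le_of_lt hle (by exact_mod_cast lt_add_of_pos_right t hε)
        rw [phi, sInf_lt_iff] at hlt
        obtain ⟨x, hx, hxlt⟩ := hlt
        obtain ⟨s, hs, rfl⟩ := hx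
        exact hup s (t + ε) (le_of_lt (by simpa using EReal.coe_lt_coe_iff.1 hxlt)) hs
      apply hdc (y - t • k)
      refine ⟨fun n => 1 / (n + 1), fun n => by positivity, ?_, ?_, fun n => ?_⟩
      · intro n m hnm
        have h1 : (n : ℝ) + 1 ≤ (m : ℝ) + 1 := by exact_mod_cast Nat.succ_le_succ hnm
        exact one_div_le_one_div_of_le (by positivity) h1
      · exact tendsto_one_div_add_atTop_nhds_zero_nat
      · have := key (1 / (n + 1)) (by positivity)
        have heq : y - (t + 1 / (n + 1)) • k = y - t • k - (1 / (n + 1 : ℝ)) • k := by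
          rw [add_smul]; abel
        rwa [heq] at this
    · intro hmem
      exact sInf_le ⟨t, hmem, rfl⟩
end

section
/- The condition A − {tk : t > 0} ⊆ core A is equivalent to the statement that {y : φ_{A,k}(y) < t} = core A + tk for all t ∈ ℝ. -/
theorem strict_sublevel_eq_core_iff {Y : Type*} [AddCommGroup Y] [Module ℝ Y]
    (A : Set Y) (hA : A.Nonempty) (k : Y) (hk : k ≠ 0) :
    (∀ a ∈ A, ∀ t : ℝ, 0 < t → a - t • k ∈ algCore A) ↔
      (∀ t : ℝ, {y : Y | phi A k y < (t : EReal)} = {y : Y | y - t • k ∈ algCore A}) := by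
  have key : ∀ (y : Y) (t : ℝ), phi A k y < (t : EReal) ↔ ∃ s : ℝ, s < t ∧ y - s • k ∈ A := by
    intro y t
    rw [phi, sInf_lt_iff]
    constructor
    · rintro ⟨b, ⟨s, hs, rfl⟩, hb⟩
      exact ⟨s, EReal.coe_lt_coe_iff.mp hb, hs⟩
    · rintro ⟨s, hst, hsA⟩
      exact ⟨(s : EReal), ⟨s, hsA, rfl⟩, EReal.coe_lt_coe_iff.mpr hst⟩
  constructor
  · intro h t
    ext y
    simp only [Set.mem_setOf_eq, key]
    constructor
    · rintro ⟨s, hst, hsA⟩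
      have := h _ hsA (t - s) (by linarith)
      have heq : y - t • k = (y - s • k) - (t - s) • k := by module
      rwa [heq]
    · rintro ⟨_, hy⟩
      obtain ⟨ε, hε, hεA⟩ := hy k
      refine ⟨t - ε, by linarith, ?_⟩
      have := hεA ε hε.le le_rfl
      have heq : y - (t - ε) • k = (y - t • k) + ε • k := by module
      rwa [heq]
  · intro h a ha t ht
    have : a ∈ {y : Y | phi A k y < (t : EReal)} :=
      (key a t).mpr ⟨0, ht, by simpa using ha⟩
    rw [h t] at this
    exact this
end

section
/- If A is algebraically closed and k ∈ −0⁺A \ {0}, then A is k-directionally closed. -/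
theorem dirClosed_of_algClosed {Y : Type*} [AddCommGroup Y] [Module ℝ Y]
    (A : Set Y) (hA : A.Nonempty) (k : Y) (hk : k ≠ 0)
    (hcl : AlgClosed A) (hrec : -k ∈ recCone A) :
    DirClosed A k := by
  rintro y ⟨t, htpos, hanti, htend, hmem⟩
  -- key: for all s > 0, y - s • k ∈ A
  have key : ∀ s : ℝ, 0 < s → y - s • k ∈ A := by
    intro s hs
    obtain ⟨n, hn⟩ := (htend.eventually (gt_mem_nhds hs)).exists
    have := hrec _ (hmem n) (s - t n) (by linarith)
    have heq : y - t n • k + (s - t n) • (-k) = y - s • k := by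
      rw [smul_neg]; rw [sub_smul]; abel
    rwa [heq] at this
  refine hcl (y - t 0 • k) (hmem 0) y ?_
  intro l hl0 hl1
  have heq : y - t 0 • k + l • (y - (y - t 0 • k)) = y - ((1 - l) * t 0) • k := by
    module
  rw [heq]
  exact key _ (by have := htpos 0; nlinarith)
end

section
/- For a proper subset A of Y and k ∈ Y \ {0}, the following are equivalent: (a) k ∈ −0⁺A; (b) A = H − C for some proper subset H of Y and a convex cone C with k ∈ C; (c) A = A − C for some non-trivial convex cone C with k ∈ C; (d) A = A − C for some non-trivial cone C with k ∈ C. -/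
theorem recCone_mem_tfae {Y : Type*} [AddCommGroup Y] [Module ℝ Y]
    (A : Set Y) (hA : A.Nonempty) (hAne : A ≠ Set.univ) (k : Y) (hk : k ≠ 0) :
    List.TFAE
      [ -k ∈ recCone A,
        ∃ (H C : Set Y), H ≠ Set.univ ∧ Convex ℝ C ∧ IsCone C ∧ k ∈ C ∧
          A = {x : Y | ∃ h ∈ H, ∃ c ∈ C, x = h - c},
        ∃ C : Set Y, Convex ℝ C ∧ IsCone C ∧ C.Nonempty ∧ C ≠ {0} ∧ C ≠ Set.univ ∧
          k ∈ C ∧ A = {x : Y | ∃ a ∈ A, ∃ c ∈ C, x = a - c},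
        ∃ C : Set Y, IsCone C ∧ C.Nonempty ∧ C ≠ {0} ∧ C ≠ Set.univ ∧
          k ∈ C ∧ A = {x : Y | ∃ a ∈ A, ∃ c ∈ C, x = a - c} ] := by

  tfae_have 1 → 2 := by
    intro h1
    refine ⟨A, {x | ∃ t : ℝ, 0 ≤ t ∧ x = t • k}, hAne, ?_, ?_, ⟨1, zero_le_one, (one_smul ℝ k).symm⟩, ?_⟩
    · rintro x ⟨t, ht, rfl⟩ y ⟨s, hs, rfl⟩ a b ha hb hab
      exact ⟨a * t + b * s, by positivity, by rw [add_smul, mul_smul, mul_smul]⟩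
    · rintro l hl x ⟨t, ht, rfl⟩
      exact ⟨l * t, by positivity, (mul_smul l t k).symm⟩
    · ext x
      constructor
      · intro hx
        exact ⟨x, hx, 0, ⟨0, le_refl 0, (zero_smul ℝ k).symm⟩, by simp⟩
      · rintro ⟨h, hh, c, ⟨t, ht, rfl⟩, rfl⟩
        have := h1 h hh t ht
        simpa [sub_eq_add_neg, smul_neg] using this
  tfae_have 2 → 3 := by
    rintro ⟨H, C, hH, hconv, hcone, hkC, hAeq⟩
    have h0C : (0 : Y) ∈ C := by simpa using hcone 0 le_rfl k hkC
    have hCC : ∀ c1 ∈ C, ∀ c2 ∈ C, c1 + c2 ∈ C := by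
      intro c1 hc1 c2 hc2
      have := hconv hc1 hc2 (by norm_num : (0:ℝ) ≤ 1/2) (by norm_num : (0:ℝ) ≤ 1/2) (by norm_num)
      have h2 := hcone 2 (by norm_num) _ this
      rw [smul_add, smul_smul, smul_smul] at h2
      norm_num at h2
      exact h2
    obtain ⟨a0, ha0⟩ := hA
    have hHne : ∃ h ∈ H, True := by
      rw [hAeq] at ha0
      obtain ⟨h, hh, _⟩ := ha0
      exact ⟨h, hh, trivial⟩
    obtain ⟨h0, hh0, -⟩ := hHne
    refine ⟨C, hconv, hcone, ⟨k, hkC⟩, ?_, ?_, hkC, ?_⟩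
    · intro hC0
      rw [hC0] at hkC
      exact hk hkC
    · intro hCuniv
      apply hAne
      rw [hAeq]
      ext x
      simp only [Set.mem_setOf_eq, Set.mem_univ, iff_true]
      exact ⟨h0, hh0, h0 - x, by rw [hCuniv]; trivial, by abel⟩
    · ext x
      constructor
      · intro hx
        exact ⟨x, hx, 0, h0C, by simp⟩
      · rintro ⟨a, ha, c, hc, rfl⟩
        rw [hAeq] at ha ⊢
        obtain ⟨h, hh, c', hc', rfl⟩ := ha
        exact ⟨h, hh, c' + c, hCC c' hc' c hc, by abel⟩
  tfae_have 3 → 4 := by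
    rintro ⟨C, _, h2, h3, h4, h5, h6, h7⟩
    exact ⟨C, h2, h3, h4, h5, h6, h7⟩
  tfae_have 4 → 1 := by
    rintro ⟨C, hcone, _, _, _, hkC, hAeq⟩
    intro a ha t ht
    have htk : t • k ∈ C := hcone t ht k hkC
    rw [hAeq]
    exact ⟨a, ha, t • k, htk, by rw [sub_eq_add_neg, smul_neg]⟩
  tfae_finish
end

section
/- If k ∈ −0⁺A, then the effective domain of φ_{A,k} equals A + {tk : t > 0}, and φ_{A,k}(y) = −∞ if and only if y + ℝk ⊆ A; in particular φ_{A,k} is real-valued on dom φ_{A,k} \ A. -/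
lemma phi_upward {Y : Type*} [AddCommGroup Y] [Module ℝ Y]
    (A : Set Y) (k : Y) (hrec : -k ∈ recCone A) {y : Y} {t s : ℝ}
    (ht : y - t • k ∈ A) (hts : t ≤ s) : y - s • k ∈ A := by
  have := hrec _ ht (s - t) (by linarith)
  have heq : y - t • k + (s - t) • (-k) = y - s • k := by
    rw [smul_neg, sub_smul]; abel
  rwa [heq] at this

lemma phi_ne_top_iff {Y : Type*} [AddCommGroup Y] [Module ℝ Y]
    (A : Set Y) (k : Y) (y : Y) :
    phi A k y ≠ ⊤ ↔ ∃ t : ℝ, y - t • k ∈ A := by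
  unfold phi
  constructor
  · intro h
    by_contra hne
    push_neg at hne
    have : {t : ℝ | y - t • k ∈ A} = ∅ := Set.eq_empty_iff_forall_notMem.2 hne
    rw [this] at h
    simp at h
  · rintro ⟨t, ht⟩ htop
    have hle : sInf ((fun t : ℝ => (t : EReal)) '' {t : ℝ | y - t • k ∈ A}) ≤ (t : EReal) :=
      sInf_le ⟨t, ht, rfl⟩
    rw [htop] at hle
    exact (EReal.coe_ne_top t) (top_le_iff.1 hle)

theorem phi_dom_and_bot {Y : Type*} [AddCommGroup Y] [Module ℝ Y]
    (A : Set Y) (hA : A.Nonempty) (k : Y) (hk : k ≠ 0)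
    (hrec : -k ∈ recCone A) :
    ({y : Y | phi A k y ≠ ⊤} = {y : Y | ∃ a ∈ A, ∃ t : ℝ, 0 < t ∧ y = a + t • k}) ∧
    (∀ y : Y, phi A k y = ⊥ ↔ ∀ t : ℝ, y + t • k ∈ A) ∧
    (∀ y : Y, phi A k y ≠ ⊤ → y ∉ A → ∃ r : ℝ, phi A k y = (r : EReal)) := by
  have hbot : ∀ y : Y, phi A k y = ⊥ ↔ ∀ t : ℝ, y + t • k ∈ A := by
    intro y
    constructor
    · intro h t
      have hlt : phi A k y < ((-t : ℝ) : EReal) := by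
        rw [h]; exact EReal.bot_lt_coe _
      obtain ⟨x, hx, hxlt⟩ := sInf_lt_iff.1 hlt
      obtain ⟨s, hs, rfl⟩ := hx
      have hxlt' : (s : EReal) < ((-t : ℝ) : EReal) := hxlt
      have hst : s ≤ -t := le_of_lt (by exact_mod_cast hxlt')
      have := phi_upward A k hrec hs hst
      rwa [show y - (-t) • k = y + t • k by rw [neg_smul]; abel] at this
    · intro h
      have hle : ∀ r : ℝ, phi A k y ≤ (r : EReal) := by
        intro r
        apply sInf_le
        exact ⟨r, by simpa [sub_eq_add_neg, ← neg_smul] using h (-r), rfl⟩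
      by_contra hne
      obtain ⟨r, hr⟩ : ∃ r : ℝ, (r : EReal) < phi A k y := by
        rcases eq_or_ne (phi A k y) ⊥ with h1 | h1
        · exact absurd h1 hne
        · rcases eq_or_ne (phi A k y) ⊤ with h2 | h2
          · exact ⟨0, by rw [h2]; exact EReal.coe_lt_top 0⟩
          · exact ⟨(phi A k y).toReal - 1, by
              conv_rhs => rw [← EReal.coe_toReal h2 h1]
              exact_mod_cast sub_one_lt _⟩
      exact absurd (hle r) (not_le.2 hr)
  refine ⟨?_, hbot, ?_⟩
  · ext y
    simp only [Set.mem_setOf_eq, phi_ne_top_iff]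
    constructor
    · rintro ⟨t, ht⟩
      have ht' := phi_upward A k hrec ht (le_max_left t 0)
      have hm := phi_upward A k hrec ht' (by linarith [le_max_right t 0] : max t 0 ≤ max t 0 + 1)
      refine ⟨y - (max t 0 + 1) • k, hm, max t 0 + 1, by positivity, by abel⟩
    · rintro ⟨a, ha, t, ht, rfl⟩
      exact ⟨t, by simpa using ha⟩
  · intro y hne hyA
    refine ⟨(phi A k y).toReal, ?_⟩
    rw [EReal.coe_toReal hne (fun hb => hyA (by simpa using (hbot y).1 hb 0))]
end

section
/- If A is a proper subset of Y and k ∈ −core 0⁺A, then φ_{A,k} is finite-valued on all of Y (i.e., φ_{A,k}(y) ∈ ℝ for every y ∈ Y). -/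
lemma coe_image_sInf (S : Set ℝ) (hne : S.Nonempty) (hbdd : BddBelow S) :
    sInf ((fun t : ℝ => (t : EReal)) '' S) = ((sInf S : ℝ) : EReal) := by
  apply le_antisymm
  · by_contra h
    push_neg at h
    obtain ⟨r, hr1, hr2⟩ := EReal.exists_between_coe_real h
    have hlb : r ∈ lowerBounds S := by
      intro t ht
      have : (r : EReal) ≤ (t : EReal) := le_trans hr2.le (sInf_le ⟨t, ht, rfl⟩)
      exact_mod_cast this
    have : (sInf S : ℝ) ≥ r := le_csInf hne hlb
    exact absurd hr1 (not_lt.2 (by exact_mod_cast this))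
  · apply le_sInf
    rintro x ⟨t, ht, rfl⟩
    exact EReal.coe_le_coe_iff.2 (csInf_le hbdd ht)

theorem phi_finite_of_core_recCone {Y : Type*} [AddCommGroup Y] [Module ℝ Y]
    (A : Set Y) (hA : A.Nonempty) (hAne : A ≠ Set.univ) (k : Y) (hk : k ≠ 0)
    (hcore : -k ∈ algCore (recCone A)) :
    ∀ y : Y, ∃ r : ℝ, phi A k y = (r : EReal) := by
  intro y
  set S : Set ℝ := {t : ℝ | y - t • k ∈ A} with hS
  obtain ⟨hrec, hcore2⟩ := hcore
  -- nonempty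
  obtain ⟨a, ha⟩ := hA
  obtain ⟨s, hs, hsall⟩ := hcore2 (y - a)
  have hu : -k + s • (y - a) ∈ recCone A := hsall s hs.le le_rfl
  have hne : S.Nonempty := by
    refine ⟨1 / s, ?_⟩
    have := hu a ha (1 / s) (by positivity)
    have heq : a + (1 / s) • (-k + s • (y - a)) = y - (1 / s) • k := by
      rw [smul_add, smul_smul, one_div_mul_cancel hs.ne', one_smul, smul_neg]
      abel
    show y - (1/s) • k ∈ A
    rw [← heq]; exact this
  -- bounded below
  obtain ⟨z, hz⟩ : ∃ z, z ∉ A := by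
    by_contra h
    push_neg at h
    exact hAne (Set.eq_univ_of_forall h)
  obtain ⟨s₂, hs₂, hs₂all⟩ := hcore2 (z - y)
  have hbdd : BddBelow S := by
    refine ⟨-(1 / s₂), fun t ht => ?_⟩
    by_contra hlt
    push_neg at hlt
    set m := -t with hm
    have hm1 : 1 / s₂ < m := by linarith
    have hm0 : 0 < m := lt_trans (by positivity) hm1
    have hs' : 0 < 1 / m := by positivity
    have hs'le : 1 / m ≤ s₂ := by
      rw [div_le_iff₀ hm0]
      rw [div_lt_iff₀ hs₂] at hm1
      linarith [hm1]
    have hu2 : -k + (1 / m) • (z - y) ∈ recCone A := hs₂all (1 / m) hs'.le hs'le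
    have ha2 : y - t • k ∈ A := ht
    have := hu2 (y - t • k) ha2 m hm0.le
    have heq : (y - t • k) + m • (-k + (1 / m) • (z - y)) = z := by
      rw [smul_add, smul_smul, mul_one_div_cancel hm0.ne', one_smul, smul_neg, hm, neg_smul]
      abel
    rw [heq] at this
    exact hz this
  exact ⟨sInf S, coe_image_sInf S hne hbdd⟩
end

section
/- If A is convex then φ_{A,k} is convex; if A is a cone then φ_{A,k} is positively homogeneous; if A + A ⊆ A then φ_{A,k} is subadditive; if A is a convex cone then φ_{A,k} is sublinear. Conversely, if additionally A is k-directionally closed and k ∈ −0⁺A \ {0}, then each of these conditions on A is necessary for the corresponding property of φ_{A,k}. -/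
/-- The epigraph of `phi A k`. -/
def epiPhi {Y : Type*} [AddCommGroup Y] [Module ℝ Y] (A : Set Y) (k : Y) : Set (Y × ℝ) :=
  {p : Y × ℝ | phi A k p.1 ≤ (p.2 : EReal)}

lemma exists_of_epi {Y : Type*} [AddCommGroup Y] [Module ℝ Y] {A : Set Y} {k : Y} {y : Y} {t : ℝ} (h : (y, t) ∈ epiPhi A k)
    {ε : ℝ} (hε : 0 < ε) : ∃ s : ℝ, s < t + ε ∧ y - s • k ∈ A := by
  have h2 : phi A k y < ((t + ε : ℝ) : EReal) :=
    lt_of_le_of_lt h (by exact_mod_cast (lt_add_of_pos_right t hε))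
  rw [phi, sInf_lt_iff] at h2
  obtain ⟨x, ⟨s, hs, rfl⟩, hlt⟩ := h2
  simp only [] at hlt
  exact ⟨s, by exact_mod_cast hlt, hs⟩

lemma epi_of_forall {Y : Type*} [AddCommGroup Y] [Module ℝ Y] {A : Set Y} {k : Y} {y : Y} {t : ℝ}
    (h : ∀ ε : ℝ, 0 < ε → ∃ s : ℝ, s ≤ t + ε ∧ y - s • k ∈ A) : (y, t) ∈ epiPhi A k := by
  by_contra hc
  have hc' : (t : EReal) < phi A k y := lt_of_not_ge hc
  obtain ⟨r, hr1, hr2⟩ := EReal.exists_between_coe_real hc'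
  have hrt : t < r := by exact_mod_cast hr1
  obtain ⟨s, hs1, hs2⟩ := h (r - t) (by linarith)
  have h1 : phi A k y ≤ (s : EReal) := sInf_le ⟨s, hs2, rfl⟩
  have h2 : (s : EReal) ≤ (r : EReal) := by exact_mod_cast (by linarith : s ≤ r)
  exact absurd (h1.trans h2) (not_le.mpr hr2)

lemma epi_of_mem {Y : Type*} [AddCommGroup Y] [Module ℝ Y] {A : Set Y} {k : Y} {y : Y} {s t : ℝ} (h : y - s • k ∈ A) (hst : s ≤ t) :
    (y, t) ∈ epiPhi A k :=
  epi_of_forall fun ε hε => ⟨s, by linarith, h⟩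

lemma mono_shift {Y : Type*} [AddCommGroup Y] [Module ℝ Y] {A : Set Y} {k : Y} (hrec : ∀ a ∈ A, ∀ t : ℝ, 0 ≤ t → a + t • (-k) ∈ A)
    {y : Y} {s s' : ℝ} (h : y - s • k ∈ A) (hss : s ≤ s') : y - s' • k ∈ A := by
  have := hrec _ h (s' - s) (by linarith)
  have e : y - s • k + (s' - s) • (-k) = y - s' • k := by
    rw [smul_neg, sub_smul]; abel
  rwa [e] at this

lemma memA_iff {Y : Type*} [AddCommGroup Y] [Module ℝ Y] {A : Set Y} {k : Y}
    (hdc : ∀ y : Y, (∃ t : ℕ → ℝ, (∀ n, 0 < t n) ∧ Antitone t ∧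
      Filter.Tendsto t Filter.atTop (nhds 0) ∧ ∀ n, y - t n • k ∈ A) → y ∈ A)
    (hrec : ∀ a ∈ A, ∀ t : ℝ, 0 ≤ t → a + t • (-k) ∈ A) {y : Y} :
    y ∈ A ↔ (y, (0:ℝ)) ∈ epiPhi A k := by
  constructor
  · intro hy
    exact epi_of_mem (by simpa using hy) le_rfl
  · intro hy
    apply hdc
    refine ⟨fun n => 1 / (n + 1), fun n => by positivity, ?_, ?_, ?_⟩
    · intro m n hmn
      apply one_div_le_one_div_of_le (by positivity)
      exact_mod_cast Nat.succ_le_succ hmn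
    · exact tendsto_one_div_add_atTop_nhds_zero_nat
    · intro n
      obtain ⟨s, hs1, hs2⟩ := exists_of_epi hy (ε := 1 / (n + 1)) (by positivity)
      exact mono_shift hrec hs2 (by linarith)

theorem phi_convexity_properties {Y : Type*} [AddCommGroup Y] [Module ℝ Y]
    (A : Set Y) (hA : A.Nonempty) (hAne : A ≠ Set.univ) (k : Y) (hk : k ≠ 0) :
    (Convex ℝ A → Convex ℝ (epiPhi A k)) ∧
    (IsCone A → ∀ p ∈ epiPhi A k, ∀ c : ℝ, 0 ≤ c → c • p ∈ epiPhi A k) ∧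
    ((∀ a ∈ A, ∀ b ∈ A, a + b ∈ A) →
      ∀ p ∈ epiPhi A k, ∀ q ∈ epiPhi A k, p + q ∈ epiPhi A k) ∧
    ((Convex ℝ A ∧ IsCone A) →
      (Convex ℝ (epiPhi A k) ∧ ∀ p ∈ epiPhi A k, ∀ c : ℝ, 0 ≤ c → c • p ∈ epiPhi A k)) ∧
    (DirClosed A k → -k ∈ recCone A →
      ((Convex ℝ (epiPhi A k) → Convex ℝ A) ∧
       ((∀ p ∈ epiPhi A k, ∀ c : ℝ, 0 ≤ c → c • p ∈ epiPhi A k) → IsCone A) ∧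
       ((∀ p ∈ epiPhi A k, ∀ q ∈ epiPhi A k, p + q ∈ epiPhi A k) →
          ∀ a ∈ A, ∀ b ∈ A, a + b ∈ A) ∧
       ((Convex ℝ (epiPhi A k) ∧
          ∀ p ∈ epiPhi A k, ∀ c : ℝ, 0 ≤ c → c • p ∈ epiPhi A k) →
          Convex ℝ A ∧ IsCone A))) := by
  have conv_fwd : Convex ℝ A → Convex ℝ (epiPhi A k) := by
    intro hconv p hp q hq a b ha hb hab
    have he : a • p + b • q = ((a • p.1 + b • q.1, a * p.2 + b * q.2) : Y × ℝ) := rfl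
    rw [he]
    apply epi_of_forall
    intro ε hε
    obtain ⟨s1, hs1, hm1⟩ := exists_of_epi (y := p.1) (t := p.2) hp hε
    obtain ⟨s2, hs2, hm2⟩ := exists_of_epi (y := q.1) (t := q.2) hq hε
    refine ⟨a * s1 + b * s2, ?_, ?_⟩
    · nlinarith [mul_le_mul_of_nonneg_left hs1.le ha, mul_le_mul_of_nonneg_left hs2.le hb]
    · have e2 : a • p.1 + b • q.1 - (a * s1 + b * s2) • k
          = a • (p.1 - s1 • k) + b • (q.1 - s2 • k) := by
        simp [smul_sub, smul_smul, add_smul]; abel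
      rw [e2]
      exact hconv hm1 hm2 ha hb hab
  have cone_fwd : IsCone A → ∀ p ∈ epiPhi A k, ∀ c : ℝ, 0 ≤ c → c • p ∈ epiPhi A k := by
    intro hcone p hp c hc
    rcases eq_or_lt_of_le hc with h0 | h0
    · obtain ⟨a, ha⟩ := hA
      have h0A : (0 : Y) ∈ A := by simpa using hcone 0 le_rfl a ha
      have he : c • p = (((0:Y), (0:ℝ)) : Y × ℝ) := by rw [← h0]; simp; rfl
      rw [he]
      exact epi_of_mem (s := 0) (by simpa using h0A) le_rfl
    · have he : c • p = ((c • p.1, c * p.2) : Y × ℝ) := rfl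
      rw [he]
      apply epi_of_forall
      intro ε hε
      obtain ⟨s, hs, hm⟩ := exists_of_epi (y := p.1) (t := p.2) hp (div_pos hε h0)
      refine ⟨c * s, ?_, ?_⟩
      · have := mul_lt_mul_of_pos_left hs h0
        rw [mul_add, mul_div_cancel₀ _ h0.ne'] at this
        linarith
      · have e2 : c • p.1 - (c * s) • k = c • (p.1 - s • k) := by
          simp [smul_sub, smul_smul]
        rw [e2]
        exact hcone c hc _ hm
  have add_fwd : (∀ a ∈ A, ∀ b ∈ A, a + b ∈ A) →
      ∀ p ∈ epiPhi A k, ∀ q ∈ epiPhi A k, p + q ∈ epiPhi A k := by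
    intro hadd p hp q hq
    have he : p + q = ((p.1 + q.1, p.2 + q.2) : Y × ℝ) := rfl
    rw [he]
    apply epi_of_forall
    intro ε hε
    obtain ⟨s1, hs1, hm1⟩ := exists_of_epi (y := p.1) (t := p.2) hp (half_pos hε)
    obtain ⟨s2, hs2, hm2⟩ := exists_of_epi (y := q.1) (t := q.2) hq (half_pos hε)
    refine ⟨s1 + s2, by linarith, ?_⟩
    have e2 : p.1 + q.1 - (s1 + s2) • k = (p.1 - s1 • k) + (q.1 - s2 • k) := by
      rw [add_smul]; abel
    rw [e2]
    exact hadd _ hm1 _ hm2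
  refine ⟨conv_fwd, cone_fwd, add_fwd, fun h => ⟨conv_fwd h.1, cone_fwd h.2⟩, ?_⟩
  intro hdc hrec
  have hrec' : ∀ a ∈ A, ∀ t : ℝ, 0 ≤ t → a + t • (-k) ∈ A := hrec
  have hiff : ∀ y : Y, y ∈ A ↔ (y, (0:ℝ)) ∈ epiPhi A k := fun y => memA_iff hdc hrec'
  have conv_bwd : Convex ℝ (epiPhi A k) → Convex ℝ A := by
    intro h x hx y hy a b ha hb hab
    have := h ((hiff x).1 hx) ((hiff y).1 hy) ha hb hab
    have he : a • ((x, (0:ℝ)) : Y × ℝ) + b • (y, (0:ℝ)) = (a • x + b • y, (0:ℝ)) := by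
      simp [Prod.ext_iff]
    rw [he] at this
    exact (hiff _).2 this
  have cone_bwd : (∀ p ∈ epiPhi A k, ∀ c : ℝ, 0 ≤ c → c • p ∈ epiPhi A k) → IsCone A := by
    intro h l hl c hc
    have := h _ ((hiff c).1 hc) l hl
    have he : l • (((c, (0:ℝ))) : Y × ℝ) = (l • c, (0:ℝ)) := by simp [Prod.ext_iff]
    rw [he] at this
    exact (hiff _).2 this
  have add_bwd : (∀ p ∈ epiPhi A k, ∀ q ∈ epiPhi A k, p + q ∈ epiPhi A k) →
      ∀ a ∈ A, ∀ b ∈ A, a + b ∈ A := by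
    intro h a ha b hb
    have := h _ ((hiff a).1 ha) _ ((hiff b).1 hb)
    have he : (((a, (0:ℝ))) : Y × ℝ) + (b, (0:ℝ)) = (a + b, (0:ℝ)) := by
      simp [Prod.ext_iff]
    rw [he] at this
    exact (hiff _).2 this
  exact ⟨conv_bwd, cone_bwd, add_bwd, fun h => ⟨conv_bwd h.1, cone_bwd h.2⟩⟩
end

section
/- For y⁰ ∈ A + ℝk and y¹ ∈ 0⁺A + ℝk, one has y⁰ + y¹ ∈ A + ℝk and φ_{A,k}(y⁰ + y¹) ≤ φ_{A,k}(y⁰) + φ_{0⁺A,k}(y¹). -/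
theorem phi_recCone_subadd {Y : Type*} [AddCommGroup Y] [Module ℝ Y]
    (A : Set Y) (hA : A.Nonempty) (k : Y) (hk : k ≠ 0) (y0 y1 : Y)
    (hy0 : ∃ a ∈ A, ∃ t : ℝ, y0 = a + t • k)
    (hy1 : ∃ u ∈ recCone A, ∃ t : ℝ, y1 = u + t • k) :
    (∃ a ∈ A, ∃ t : ℝ, y0 + y1 = a + t • k) ∧
      phi A k (y0 + y1) ≤ phi A k y0 + phi (recCone A) k y1 := by
  obtain ⟨a, ha, s0, hs0⟩ := hy0
  obtain ⟨u, hu, s1, hs1⟩ := hy1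
  have hau : a + u ∈ A := by
    have := hu a ha 1 zero_le_one
    simpa using this
  have key : ∀ s : ℝ, y0 - s • k ∈ A → ∀ t : ℝ, y1 - t • k ∈ recCone A →
      (y0 + y1) - (s + t) • k ∈ A := by
    intro s hs t ht
    have := ht (y0 - s • k) hs 1 zero_le_one
    have heq : (y0 - s • k) + (1:ℝ) • (y1 - t • k) = (y0 + y1) - (s + t) • k := by
      module
    rwa [heq] at this
  constructor
  · refine ⟨a + u, hau, s0 + s1, ?_⟩
    rw [hs0, hs1]; module
  · -- membership of the two starting points
    have hm0 : y0 - s0 • k ∈ A := by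
      rw [hs0]; simpa using ha
    have hm1 : y1 - s1 • k ∈ recCone A := by
      rw [hs1]; simpa using hu
    have hne0 : phi A k y0 ≠ ⊤ := by
      refine ne_top_of_le_ne_top (by simp) (sInf_le ⟨s0, hm0, rfl⟩)
    have hne1 : phi (recCone A) k y1 ≠ ⊤ := by
      refine ne_top_of_le_ne_top (by simp) (sInf_le ⟨s1, hm1, rfl⟩)
    refine EReal.le_add_of_forall_gt (Or.inr hne1) (Or.inl hne0) ?_
    intro a' ha' b' hb'
    obtain ⟨x, ⟨s, hs, rfl⟩, hxa⟩ := sInf_lt_iff.1 ha'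
    obtain ⟨y, ⟨t, ht, rfl⟩, hyb⟩ := sInf_lt_iff.1 hb'
    calc phi A k (y0 + y1) ≤ ((s + t : ℝ) : EReal) :=
          sInf_le ⟨s + t, key s hs t ht, rfl⟩
      _ = (s : EReal) + (t : EReal) := by norm_cast
      _ ≤ a' + b' := add_le_add hxa.le hyb.le
end

section
/- If A is k-directionally closed, then its recession cone 0⁺A is k-directionally closed. -/
theorem recCone_dirClosed {Y : Type*} [AddCommGroup Y] [Module ℝ Y]
    (A : Set Y) (hA : A.Nonempty) (k : Y) (hk : k ≠ 0)
    (hdc : DirClosed A k) : DirClosed (recCone A) k := by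
  intro u ⟨t, hpos, hanti, hlim, hmem⟩
  intro a ha s hs
  rcases eq_or_lt_of_le hs with rfl | hs'
  · simpa using ha
  · apply hdc (a + s • u)
    refine ⟨fun n => s * t n, fun n => mul_pos hs' (hpos n),
      fun m n hmn => mul_le_mul_of_nonneg_left (hanti hmn) hs, ?_, fun n => ?_⟩
    · simpa using hlim.const_mul s
    · have := hmem n a ha s hs
      have h : a + s • (u - t n • k) = a + s • u - (s * t n) • k := by
        simp [smul_sub, mul_smul]; abel
      rwa [h] at this
end

section
/- If A − B ⊆ A, then φ_{A,k} is B-monotone: for y¹, y² ∈ dom φ_{A,k} with y² − y¹ ∈ B one has φ_{A,k}(y¹) ≤ φ_{A,k}(y²). Conversely, if k ∈ −0⁺A, A is k-directionally closed, A − B ⊆ A + ℝk, and φ_{A,k} is B-monotone, then A − B ⊆ A. -/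
theorem phi_monotone_iff {Y : Type*} [AddCommGroup Y] [Module ℝ Y]
    (A B : Set Y) (hA : A.Nonempty) (k : Y) (hk : k ≠ 0) :
    ((∀ a ∈ A, ∀ b ∈ B, a - b ∈ A) →
      ∀ y1 y2 : Y, (∃ a ∈ A, ∃ t : ℝ, y1 = a + t • k) →
        (∃ a ∈ A, ∃ t : ℝ, y2 = a + t • k) → y2 - y1 ∈ B →
        phi A k y1 ≤ phi A k y2) ∧
    (-k ∈ recCone A → DirClosed A k →
      (∀ a ∈ A, ∀ b ∈ B, ∃ a' ∈ A, ∃ t : ℝ, a - b = a' + t • k) →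
      (∀ y1 y2 : Y, (∃ a ∈ A, ∃ t : ℝ, y1 = a + t • k) →
        (∃ a ∈ A, ∃ t : ℝ, y2 = a + t • k) → y2 - y1 ∈ B →
        phi A k y1 ≤ phi A k y2) →
      ∀ a ∈ A, ∀ b ∈ B, a - b ∈ A) := by
  constructor
  · intro hAB y1 y2 _ _ hb
    apply sInf_le_sInf
    apply Set.image_mono
    intro t ht
    have h : y1 - t • k = (y2 - t • k) - (y2 - y1) := by abel
    rw [Set.mem_setOf_eq, h]
    exact hAB _ ht _ hb
  · intro hrec hdc hdom hmono a ha b hb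
    -- phi A k (a - b) ≤ phi A k a ≤ 0
    have h2 : phi A k a ≤ (0 : EReal) := by
      apply sInf_le
      refine ⟨0, ?_, by norm_num⟩
      simp [ha]
    have h1 : phi A k (a - b) ≤ (0 : EReal) := by
      refine le_trans (hmono (a - b) a ?_ ⟨a, ha, 0, by simp⟩ (by simpa using hb)) h2
      obtain ⟨a', ha', t, ht⟩ := hdom a ha b hb
      exact ⟨a', ha', t, ht⟩
    -- every positive t belongs to the set
    have hpos : ∀ t : ℝ, 0 < t → (a - b) - t • k ∈ A := by
      intro t ht
      have hlt : phi A k (a - b) < (t : EReal) := lt_of_le_of_lt h1 (by exact_mod_cast ht)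
      rw [phi, sInf_lt_iff] at hlt
      obtain ⟨x, hx, hxt⟩ := hlt
      obtain ⟨s, hs, rfl⟩ := hx
      have hst : s < t := by simp only [] at hxt; exact_mod_cast hxt
      have := hrec _ hs (t - s) (by linarith)
      have heq : ((a - b) - s • k) + (t - s) • (-k) = (a - b) - t • k := by
        rw [smul_neg, sub_smul]
        abel
      rwa [heq] at this
    exact hdc (a - b) ⟨fun n => 1 / (n + 1), fun n => by positivity,
      fun m n hmn => by
        apply one_div_le_one_div_of_le (by positivity)
        have : (m:ℝ) ≤ n := Nat.cast_le.mpr hmn; linarith,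
      tendsto_one_div_add_atTop_nhds_zero_nat,
      fun n => hpos _ (by positivity)⟩
end

section
/- Suppose A − B ⊆ A and φ_{A,k} is finite-valued on F ⊆ Y. Then φ_{A,k} is strictly (core B)-monotone on F: for y¹, y² ∈ F with y² − y¹ ∈ core B \ {0}, φ_{A,k}(y¹) < φ_{A,k}(y²). -/
theorem phi_strictly_coreB_monotone {Y : Type*} [AddCommGroup Y] [Module ℝ Y]
    (A B : Set Y) (hA : A.Nonempty) (k : Y) (hk : k ≠ 0) (F : Set Y)
    (hAB : ∀ a ∈ A, ∀ b ∈ B, a - b ∈ A)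
    (hfin : ∀ y ∈ F, ∃ r : ℝ, phi A k y = (r : EReal)) :
    ∀ y1 ∈ F, ∀ y2 ∈ F, y2 - y1 ∈ algCore B → y2 - y1 ≠ 0 →
      phi A k y1 < phi A k y2 := by
  intro y1 hy1 y2 hy2 hcore _
  obtain ⟨r1, hr1⟩ := hfin y1 hy1
  obtain ⟨r2, hr2⟩ := hfin y2 hy2
  obtain ⟨hdB, hcore'⟩ := hcore
  obtain ⟨s, hs, hsk⟩ := hcore' (-k)
  have hBs : y2 - y1 - s • k ∈ B := by
    have := hsk s hs.le le_rfl
    simpa [smul_neg, sub_eq_add_neg] using this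
  -- key: t2 ∈ S2 → t2 - s ∈ S1
  have key : ∀ t2 : ℝ, y2 - t2 • k ∈ A → y1 - (t2 - s) • k ∈ A := by
    intro t2 ht2
    have := hAB _ ht2 _ hBs
    have : y2 - t2 • k - (y2 - y1 - s • k) = y1 - (t2 - s) • k := by
      rw [sub_smul]; abel
    rw [← this]
    exact hAB _ ht2 _ hBs
  -- r1 ≤ t2 - s for all t2 ∈ S2
  have h1 : ∀ t2 : ℝ, y2 - t2 • k ∈ A → r1 ≤ t2 - s := by
    intro t2 ht2
    have hmem : ((t2 - s : ℝ) : EReal) ∈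
        ((fun t : ℝ => (t : EReal)) '' {t : ℝ | y1 - t • k ∈ A}) :=
      ⟨t2 - s, key t2 ht2, rfl⟩
    have := sInf_le hmem
    rw [← phi, hr1] at this
    exact_mod_cast this
  -- hence r1 + s ≤ r2
  have h2 : ((r1 + s : ℝ) : EReal) ≤ phi A k y2 := by
    apply le_sInf
    rintro x ⟨t2, ht2, rfl⟩
    have h := h1 t2 ht2
    have hle : r1 + s ≤ t2 := by linarith
    show ((r1 + s : ℝ) : EReal) ≤ ((t2 : ℝ) : EReal)
    exact_mod_cast hle
  rw [hr2] at h2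
  have h3 : r1 + s ≤ r2 := by exact_mod_cast h2
  rw [hr1, hr2]
  have : r1 < r2 := by linarith
  exact_mod_cast this
end

section
/- If A is a non-trivial convex cone and k ∈ −core A, then A is k-directionally closed if and only if A is algebraically closed. -/
theorem dirClosed_iff_algClosed_cone {Y : Type*} [AddCommGroup Y] [Module ℝ Y]
    (A : Set Y) (hconv : Convex ℝ A) (hcone : IsCone A)
    (hne : A.Nonempty) (hA0 : A ≠ {0}) (hAuniv : A ≠ Set.univ)
    (k : Y) (hk : -k ∈ algCore A) :
    DirClosed A k ↔ AlgClosed A := by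
  obtain ⟨hkA, hkcore⟩ := hk
  -- A is closed under addition
  have hadd : ∀ x ∈ A, ∀ y ∈ A, x + y ∈ A := by
    intro x hx y hy
    have h := hconv hx hy (by norm_num : (0:ℝ) ≤ 1/2) (by norm_num : (0:ℝ) ≤ 1/2)
      (by norm_num)
    have h2 := hcone 2 (by norm_num) _ h
    have : (2:ℝ) • ((1/2:ℝ) • x + (1/2:ℝ) • y) = x + y := by
      rw [smul_add, smul_smul, smul_smul]; norm_num
    rwa [this] at h2
  constructor
  · -- DirClosed → AlgClosed
    intro hd a ha y hseg
    obtain ⟨t, ht, hts⟩ := hkcore (y - a)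
    have key : ∀ s : ℝ, 0 < s → y - s • k ∈ A := by
      intro s hs
      set m : ℝ := min (s * t) (1/2) with hm
      have hm0 : 0 < m := lt_min (mul_pos hs ht) (by norm_num)
      have hm1 : m < 1 := lt_of_le_of_lt (min_le_right _ _) (by norm_num)
      set l : ℝ := 1 - m with hl
      have hp : a + l • (y - a) ∈ A := hseg l (by simp [hl]; linarith) (by simp [hl]; linarith)
      have hr0 : 0 ≤ m / s := le_of_lt (div_pos hm0 hs)
      have hrt : m / s ≤ t := by
        rw [div_le_iff₀ hs]
        calc m ≤ s * t := min_le_left _ _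
        _ = t * s := mul_comm _ _
      have hq : -k + (m / s) • (y - a) ∈ A := hts (m / s) hr0 hrt
      have hq2 : s • (-k + (m / s) • (y - a)) ∈ A := hcone s hs.le _ hq
      have heq : (a + l • (y - a)) + s • (-k + (m / s) • (y - a)) = y - s • k := by
        rw [smul_add, smul_smul, mul_div_cancel₀ _ (ne_of_gt hs)]
        simp only [hl, sub_smul, one_smul, smul_neg]
        abel
      have := hadd _ hp _ hq2
      rwa [heq] at this
    refine hd y ⟨fun n => (n + 1 : ℝ)⁻¹, fun n => by positivity, ?_, ?_, ?_⟩
    · intro m n hmn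
      apply inv_anti₀ (by positivity)
      exact_mod_cast Nat.succ_le_succ hmn
    · exact tendsto_one_div_add_atTop_nhds_zero_nat.congr (by intro n; rw [one_div])
    · intro n; exact key _ (by positivity)
  · -- AlgClosed → DirClosed
    intro hc y ⟨t, htpos, hanti, htend, hmem⟩
    have key : ∀ s : ℝ, 0 < s → y - s • k ∈ A := by
      intro s hs
      obtain ⟨n, hn⟩ := ((htend.eventually_le_const hs).and
        (Filter.eventually_atTop.mpr ⟨0, fun _ _ => trivial⟩)).exists
      have h1 : y - t n • k ∈ A := hmem n
      have h2 : (s - t n) • (-k) ∈ A := hcone _ (by linarith [hn.1]) _ hkA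
      have := hadd _ h1 _ h2
      have heq : (y - t n • k) + (s - t n) • (-k) = y - s • k := by
        rw [smul_neg, sub_smul]; abel
      rwa [heq] at this
    refine hc (y - t 0 • k) (hmem 0) y ?_
    intro l hl0 hl1
    have heq : (y - t 0 • k) + l • (y - (y - t 0 • k)) = y - ((1 - l) * t 0) • k := by
      rw [sub_sub_cancel, smul_smul, sub_mul, one_mul, sub_smul]; abel
    rw [heq]
    exact key _ (mul_pos (by linarith) (htpos 0))
end

section
/- Let C be a non-trivial algebraically closed convex cone and k ∈ −core C. Then the Minkowski functional of C + k satisfies p_{C+k}(y) = max{φ_{C,k}(y), 0} for all y ∈ Y; in particular p_{C+k} = φ_{C,k} on Y \ C and p_{C+k} = 0 on C, and p_{C+k} is finite-valued and sublinear. -/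
/-- The Minkowski functional of a set, valued in `EReal`. -/
noncomputable def mink {Y : Type*} [AddCommGroup Y] [Module ℝ Y] (M : Set Y) (y : Y) : EReal :=
  sInf ((fun l : ℝ => (l : EReal)) '' {l : ℝ | 0 < l ∧ ∃ m ∈ M, y = l • m})

private lemma ereal_coe_sInf {s : Set ℝ} (hne : s.Nonempty) (hbd : BddBelow s) :
    sInf ((fun t : ℝ => (t : EReal)) '' s) = ((sInf s : ℝ) : EReal) :=
  (Monotone.map_csInf_of_continuousAt (continuous_coe_real_ereal.continuousAt)
    (fun _ _ h => EReal.coe_le_coe_iff.2 h) hne hbd).symm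

theorem minkowski_eq_max_phi {Y : Type*} [AddCommGroup Y] [Module ℝ Y]
    (C : Set Y) (hconv : Convex ℝ C) (hcone : IsCone C)
    (hne : C.Nonempty) (hC0 : C ≠ {0}) (hCuniv : C ≠ Set.univ)
    (hcl : AlgClosed C) (k : Y) (hk : -k ∈ algCore C) :
    ∃ p : Y → ℝ,
      (∀ y : Y, (p y : EReal) = mink ((fun c => c + k) '' C) y) ∧
      (∀ y : Y, (p y : EReal) = max (phi C k y) 0) ∧
      (∀ y : Y, y ∉ C → (p y : EReal) = phi C k y) ∧
      (∀ y ∈ C, p y = 0) ∧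
      (∀ c : ℝ, 0 ≤ c → ∀ y : Y, p (c • y) = c * p y) ∧
      (∀ x y : Y, p (x + y) ≤ p x + p y) := by
  classical
  -- C is closed under addition
  have hadd : ∀ a ∈ C, ∀ b ∈ C, a + b ∈ C := by
    intro a ha b hb
    have h2 := hconv ha hb (by norm_num : (0:ℝ) ≤ 1/2) (by norm_num : (0:ℝ) ≤ 1/2)
      (by norm_num)
    have h3 := hcone 2 (by norm_num) _ h2
    have : (2:ℝ) • ((1/2 : ℝ) • a + (1/2 : ℝ) • b) = a + b := by
      rw [smul_add, smul_smul, smul_smul]; norm_num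
    rwa [this] at h3
  have hnegk : -k ∈ C := hk.1
  set S : Y → Set ℝ := fun y => {t : ℝ | y - t • k ∈ C} with hSdef
  -- S y is upward closed
  have hSup : ∀ y : Y, ∀ t ∈ S y, ∀ t' : ℝ, t ≤ t' → t' ∈ S y := by
    intro y t ht t' htt'
    have h1 : (t' - t) • (-k) ∈ C := hcone _ (by linarith) _ hnegk
    have h2 := hadd _ ht _ h1
    have : (y - t • k) + (t' - t) • (-k) = y - t' • k := by
      rw [smul_neg, sub_smul]; abel
    rwa [this] at h2
  -- S y is nonempty
  have hSne : ∀ y : Y, (S y).Nonempty := by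
    intro y
    obtain ⟨t, ht, hts⟩ := hk.2 y
    have h1 : -k + t • y ∈ C := hts t ht.le le_rfl
    have h2 : t⁻¹ • (-k + t • y) ∈ C := hcone _ (by positivity) _ h1
    refine ⟨t⁻¹, ?_⟩
    have : t⁻¹ • (-k + t • y) = y - t⁻¹ • k := by
      rw [smul_add, smul_smul, inv_mul_cancel₀ ht.ne', one_smul, smul_neg]; abel
    show y - t⁻¹ • k ∈ C
    rwa [this] at h2
  -- S y is bounded below
  have hSbdd : ∀ y : Y, BddBelow (S y) := by
    intro y
    by_contra hb
    apply hCuniv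
    rw [Set.eq_univ_iff_forall]
    intro z
    obtain ⟨t, ht, hts⟩ := hk.2 (z - y)
    have h1 : -k + t • (z - y) ∈ C := hts t ht.le le_rfl
    have h2 : t⁻¹ • (-k + t • (z - y)) ∈ C := hcone _ (by positivity) _ h1
    have h2' : (z - y) - t⁻¹ • k ∈ C := by
      have : t⁻¹ • (-k + t • (z - y)) = (z - y) - t⁻¹ • k := by
        rw [smul_add, smul_smul, inv_mul_cancel₀ ht.ne', one_smul, smul_neg]; abel
      rwa [this] at h2
    -- y + t⁻¹ • k ∈ C since S y is unbounded below
    have h3 : (-t⁻¹ : ℝ) ∈ S y := by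
      rw [not_bddBelow_iff] at hb
      obtain ⟨t', ht', hlt⟩ := hb (-t⁻¹)
      exact hSup y t' ht' _ hlt.le
    have h3' : y + t⁻¹ • k ∈ C := by
      have h3'' : y - (-t⁻¹ : ℝ) • k ∈ C := h3
      have e : y + t⁻¹ • k = y - (-t⁻¹ : ℝ) • k := by rw [neg_smul]; abel
      rw [e]; exact h3''
    have h4 := hadd _ h2' _ h3'
    have : ((z - y) - t⁻¹ • k) + (y + t⁻¹ • k) = z := by abel
    rwa [this] at h4
  set m : Y → ℝ := fun y => sInf (S y) with hmdef
  -- members of S y are ≥ m y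
  have hmle : ∀ y : Y, ∀ t ∈ S y, m y ≤ t := fun y t ht => csInf_le (hSbdd y) ht
  -- the infimum is attained
  have hmmem : ∀ y : Y, m y ∈ S y := by
    intro y
    have hmem : ∀ t : ℝ, m y < t → t ∈ S y := by
      intro t hlt
      obtain ⟨t', ht', hlt'⟩ := exists_lt_of_csInf_lt (hSne y) hlt
      exact hSup y t' ht' t hlt'.le
    have ha : y - (m y + 1) • k ∈ C := hmem (m y + 1) (by linarith)
    have := hcl _ ha (y - m y • k) ?_
    · exact this
    intro l hl0 hl1
    have h1 : (y - (m y + 1) • k) + l • ((y - m y • k) - (y - (m y + 1) • k))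
        = y - (m y + 1 - l) • k := by
      have h0 : (y - m y • k) - (y - (m y + 1) • k) = k := by
        rw [add_smul, one_smul]; abel
      rw [h0, sub_smul, add_smul, one_smul]; abel
    rw [h1]
    exact hmem _ (by linarith)
  have hSeq : ∀ y : Y, S y = Set.Ici (m y) := by
    intro y
    ext t
    exact ⟨fun ht => hmle y t ht, fun ht => hSup y (m y) (hmmem y) t ht⟩
  -- the function p
  refine ⟨fun y => max (m y) 0, ?_, ?_, ?_, ?_, ?_, ?_⟩
  · -- Minkowski functional of C + k
    intro y
    have hset : {l : ℝ | 0 < l ∧ ∃ mm ∈ (fun c => c + k) '' C, y = l • mm}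
        = {l : ℝ | 0 < l ∧ l ∈ S y} := by
      ext l
      simp only [Set.mem_setOf_eq, Set.mem_image]
      constructor
      · rintro ⟨hl, mm, ⟨c, hc, rfl⟩, rfl⟩
        refine ⟨hl, ?_⟩
        show l • (c + k) - l • k ∈ C
        have : l • (c + k) - l • k = l • c := by rw [smul_add]; abel
        rw [this]
        exact hcone l hl.le c hc
      · rintro ⟨hl, hS⟩
        refine ⟨hl, l⁻¹ • (y - l • k) + k, ⟨l⁻¹ • (y - l • k), hcone _ (by positivity) _ hS, rfl⟩, ?_⟩
        rw [smul_add, smul_smul, mul_inv_cancel₀ hl.ne', one_smul]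
        abel
    rw [mink, hset]
    rcases le_or_gt (m y) 0 with hm | hm
    · have : {l : ℝ | 0 < l ∧ l ∈ S y} = Set.Ioi 0 := by
        ext l
        simp only [Set.mem_setOf_eq, Set.mem_Ioi, hSeq y, Set.mem_Ici]
        exact ⟨fun h => h.1, fun h => ⟨h, by linarith⟩⟩
      rw [this, ereal_coe_sInf Set.nonempty_Ioi bddBelow_Ioi, csInf_Ioi]
      show ((max (m y) 0 : ℝ) : EReal) = ((0 : ℝ) : EReal)
      rw [max_eq_right hm]
    · have : {l : ℝ | 0 < l ∧ l ∈ S y} = Set.Ici (m y) := by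
        ext l
        simp only [Set.mem_setOf_eq, hSeq y, Set.mem_Ici]
        exact ⟨fun h => h.2, fun h => ⟨by linarith, h⟩⟩
      rw [this, ereal_coe_sInf Set.nonempty_Ici bddBelow_Ici, csInf_Ici]
      show ((max (m y) 0 : ℝ) : EReal) = ((m y : ℝ) : EReal)
      rw [max_eq_left hm.le]
  · -- max with phi
    intro y
    have hphi : phi C k y = (m y : EReal) := by
      rw [phi, ereal_coe_sInf (hSne y) (hSbdd y)]
    show ((max (m y) 0 : ℝ) : EReal) = _
    rw [hphi, ← EReal.coe_zero, ← Monotone.map_max (fun _ _ h => EReal.coe_le_coe_iff.2 h)]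
  · -- equals phi off C
    intro y hy
    have hphi : phi C k y = (m y : EReal) := by
      rw [phi, ereal_coe_sInf (hSne y) (hSbdd y)]
    have hm : 0 < m y := by
      rcases lt_trichotomy (m y) 0 with h | h | h
      · exfalso
        have h1 : (- m y) • (-k) ∈ C := hcone _ (by linarith) _ hnegk
        have h2 := hadd _ (hmmem y) _ h1
        have : (y - m y • k) + (- m y) • (-k) = y := by
          rw [smul_neg, neg_smul, neg_neg]; abel
        rw [this] at h2
        exact hy h2
      · exfalso
        have h2 := hmmem y
        rw [hSdef] at h2
        simp only [Set.mem_setOf_eq, h, zero_smul, sub_zero] at h2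
        exact hy h2
      · exact h
    show ((max (m y) 0 : ℝ) : EReal) = _
    rw [hphi]
    norm_cast
    exact max_eq_left hm.le
  · -- zero on C
    intro y hy
    have h0 : (0:ℝ) ∈ S y := by
      show y - (0:ℝ) • k ∈ C
      simpa using hy
    have := hmle y 0 h0
    show max (m y) 0 = 0
    rw [max_eq_right this]
  · -- positive homogeneity
    intro c hc y
    rcases eq_or_lt_of_le hc with rfl | hc
    · have h0 : (0:Y) ∈ C := by
        obtain ⟨c₀, hc₀⟩ := hne
        simpa using hcone 0 le_rfl c₀ hc₀
      have h0' : (0:ℝ) ∈ S (0:Y) := by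
        show (0:Y) - (0:ℝ) • k ∈ C
        simpa using h0
      have hle := hmle _ 0 h0'
      show max (m ((0:ℝ) • y)) 0 = 0 * max (m y) 0
      rw [zero_smul, zero_mul, max_eq_right hle]
    · have hmeq : m (c • y) = c * m y := by
        apply le_antisymm
        · apply hmle
          show c • y - (c * m y) • k ∈ C
          have : c • y - (c * m y) • k = c • (y - m y • k) := by
            rw [smul_sub, smul_smul]
          rw [this]
          exact hcone c hc.le _ (hmmem y)
        · have h1 : c⁻¹ • (c • y - m (c • y) • k) ∈ C := hcone _ (by positivity) _ (hmmem (c • y))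
          have h2 : (c⁻¹ * m (c • y)) ∈ S y := by
            show y - (c⁻¹ * m (c • y)) • k ∈ C
            have : y - (c⁻¹ * m (c • y)) • k = c⁻¹ • (c • y - m (c • y) • k) := by
              rw [smul_sub, smul_smul, smul_smul, inv_mul_cancel₀ hc.ne', one_smul]
            rwa [this]
          have h3 := hmle y _ h2
          calc c * m y ≤ c * (c⁻¹ * m (c • y)) := by
                exact mul_le_mul_of_nonneg_left h3 hc.le
            _ = m (c • y) := by field_simp
      show max (m (c • y)) 0 = c * max (m y) 0
      rw [hmeq, mul_max_of_nonneg _ _ hc.le, mul_zero]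
  · -- subadditivity
    intro x y
    have hsum : m x + m y ∈ S (x + y) := by
      have h1 := hadd _ (hmmem x) _ (hmmem y)
      show (x + y) - (m x + m y) • k ∈ C
      have : (x + y) - (m x + m y) • k = (x - m x • k) + (y - m y • k) := by
        rw [add_smul]; abel
      rwa [this]
    have h2 := hmle _ _ hsum
    show max (m (x + y)) 0 ≤ max (m x) 0 + max (m y) 0
    rcases le_total (m (x+y)) 0 with h | h
    · rw [max_eq_right h]
      positivity
    · rw [max_eq_left h]
      calc m (x + y) ≤ m x + m y := h2
        _ ≤ max (m x) 0 + max (m y) 0 := add_le_add (le_max_left _ _) (le_max_left _ _)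
end

section
/- Let C be a non-trivial algebraically closed convex pointed cone, k ∈ core C, and a ∈ Y. Let ‖·‖_{C,k} be the order unit norm given by the Minkowski functional of the order interval [−k,k]_C = (C − k) ∩ (k − C). Then ‖y − a‖_{C,k} = φ_{a−C,k}(y) for all y ∈ a + C. -/
theorem orderUnitNorm_eq_phi {Y : Type*} [AddCommGroup Y] [Module ℝ Y]
    (C : Set Y) (hconv : Convex ℝ C) (hcone : IsCone C)
    (hpointed : C ∩ (-C) = {0})
    (hne : C.Nonempty) (hC0 : C ≠ {0}) (hCuniv : C ≠ Set.univ)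
    (hcl : AlgClosed C) (k : Y) (hk : k ∈ algCore C) (a : Y) :
    ∀ y : Y, y - a ∈ C →
      mink ({x : Y | x + k ∈ C} ∩ {x : Y | k - x ∈ C}) (y - a) =
        phi ((fun c => a - c) '' C) k y := by
  intro y hy
  set z := y - a with hz
  have hkC : k ∈ C := hk.1
  -- C is closed under addition
  have hadd : ∀ c1 ∈ C, ∀ c2 ∈ C, c1 + c2 ∈ C := by
    intro c1 h1 c2 h2
    have h3 : (1/2 : ℝ) • c1 + (1/2 : ℝ) • c2 ∈ C :=
      hconv h1 h2 (by norm_num) (by norm_num) (by norm_num)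
    have h4 := hcone 2 (by norm_num) _ h3
    have heq : (2:ℝ) • ((1/2 : ℝ) • c1 + (1/2 : ℝ) • c2) = c1 + c2 := by
      rw [smul_add, smul_smul, smul_smul]; norm_num
    rwa [heq] at h4
  -- k ≠ 0
  have hk0 : k ≠ 0 := by
    intro h0
    apply hCuniv
    ext w
    simp only [Set.mem_univ, iff_true]
    obtain ⟨t, ht, hs⟩ := hk.2 w
    have hw := hs t ht.le le_rfl
    rw [h0, zero_add] at hw
    have h5 := hcone t⁻¹ (by positivity) _ hw
    rwa [smul_smul, inv_mul_cancel₀ ht.ne', one_smul] at h5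
  -- pointedness helper
  have hpt : ∀ x : Y, x ∈ C → -x ∈ C → x = 0 := by
    intro x hx hnx
    have hmem : x ∈ C ∩ (-C) := ⟨hx, by simpa using hnx⟩
    rw [hpointed] at hmem
    simpa using hmem
  -- elements of the phi set are nonneg
  have hTnonneg : ∀ t : ℝ, t • k - z ∈ C → 0 ≤ t := by
    intro t ht
    by_contra hneg
    push_neg at hneg
    have hnt : (-t) • k ∈ C := hcone (-t) (by linarith) _ hkC
    have h1 : -(t • k - z) ∈ C := by
      have h1' := hadd _ hy _ hnt
      have heq : z + (-t) • k = -(t • k - z) := by rw [neg_smul]; abel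
      rwa [heq] at h1'
    have h2 : t • k - z = 0 := hpt _ ht h1
    have h3 : z = t • k := by
      exact (sub_eq_zero.mp h2).symm
    have h4 : -z ∈ C := by
      have := hcone (-t) (by linarith) _ hkC
      rw [h3, ← neg_smul]; exact this
    have h5 : z = 0 := hpt _ hy h4
    rw [h5] at h3
    have h6 : t = 0 := by
      rcases smul_eq_zero.mp h3.symm with h | h
      · exact h
      · exact absurd h hk0
    linarith
  -- rewrite the mink set
  have hMset : {l : ℝ | 0 < l ∧ ∃ m ∈ ({x : Y | x + k ∈ C} ∩ {x : Y | k - x ∈ C}), z = l • m}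
      = {t : ℝ | 0 < t ∧ t • k - z ∈ C} := by
    ext l
    constructor
    · rintro ⟨hl, m, ⟨_, hm2⟩, hzm⟩
      refine ⟨hl, ?_⟩
      have := hcone l hl.le _ hm2
      rwa [smul_sub, ← hzm] at this
    · rintro ⟨hl, hC⟩
      refine ⟨hl, l⁻¹ • z, ⟨?_, ?_⟩, ?_⟩
      · have h1 : z + l • k ∈ C := hadd _ hy _ (hcone l hl.le _ hkC)
        have h2 := hcone l⁻¹ (by positivity) _ h1
        rwa [smul_add, smul_smul, inv_mul_cancel₀ hl.ne', one_smul] at h2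
      · have h2 := hcone l⁻¹ (by positivity) _ hC
        rwa [smul_sub, smul_smul, inv_mul_cancel₀ hl.ne', one_smul] at h2
      · rw [smul_smul, mul_inv_cancel₀ hl.ne', one_smul]
  -- rewrite the phi set
  have hTset : {t : ℝ | y - t • k ∈ (fun c => a - c) '' C} = {t : ℝ | t • k - z ∈ C} := by
    ext t
    simp only [Set.mem_setOf_eq, Set.mem_image]
    constructor
    · rintro ⟨c, hc, hct⟩
      have hce : c = t • k - z := by
        rw [hz, show t • k - (y - a) = a - (y - t • k) from by abel, ← hct]
        abel
      rwa [← hce]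
    · intro hc
      exact ⟨t • k - z, hc, by rw [hz]; abel⟩
  rw [mink, phi, hMset, hTset]
  apply le_antisymm
  · -- sInf S' ≤ sInf T'
    apply le_sInf
    rintro b ⟨t, ht, rfl⟩
    simp only [Set.mem_setOf_eq] at ht
    have htnn : 0 ≤ t := hTnonneg t ht
    apply le_of_forall_gt_imp_ge_of_dense
    intro c hc
    obtain ⟨r, hr1, hr2⟩ := EReal.lt_iff_exists_real_btwn.mp hc
    have hrt : t < r := EReal.coe_lt_coe_iff.mp hr1
    have hrS : r ∈ {t : ℝ | 0 < t ∧ t • k - z ∈ C} := by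
      refine ⟨by linarith, ?_⟩
      have h1 : (r - t) • k ∈ C := hcone (r - t) (by linarith) _ hkC
      have h2 := hadd _ ht _ h1
      have heq : t • k - z + (r - t) • k = r • k - z := by
        rw [sub_smul]; abel
      rwa [heq] at h2
    exact le_trans (sInf_le ⟨r, hrS, rfl⟩) hr2.le
  · -- sInf T' ≤ sInf S'
    apply sInf_le_sInf
    apply Set.image_mono
    intro t ht
    exact ht.2
end
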